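/- arXiv:1808.07600 — 2 statements merged into one kernel-verified Lean document; each statement's English description precedes it below -/
import Mathlib

section
/- Let p be an integer-valued supermodular set-function on the subsets of a nonempty finite set S with p(∅) = 0, and assume Ḃ(p) is nonempty. Then for every integer k with 1 ≤ k ≤ n, every decreasingly minimal element m of Ḃ(p) minimizes the sum of the k largest components over Ḃ(p); that is, Σ_{j=1}^{k} m↓(j) ≤ Σ_{j=1}^{k} y↓(j) for every y ∈ Ḃ(p). -/
open Finset

variable {α : Type*}

/-- Integer-valued supermodular set-function. -/
def Supermodular [DecidableEq α] (p : Finset α → ℤ) : Prop :=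
  ∀ X Y : Finset α, p X + p Y ≤ p (X ∩ Y) + p (X ∪ Y)

/-- The M-convex set `Ḃ(p)` of integral elements of the base-polyhedron `B'(p)`:
all `m : α → ℤ` with `m̃(X) ≥ p(X)` for every `X` and `m̃(S) = p(S)`. -/
def Bdot [Fintype α] (p : Finset α → ℤ) : Set (α → ℤ) :=
  {m | (∀ X : Finset α, p X ≤ ∑ s ∈ X, m s) ∧ (∑ s, m s) = p Finset.univ}

/-- `x↓`: the values of `x` arranged in nonincreasing order. -/
def sortedDesc [Fintype α] (x : α → ℤ) : List ℤ :=
  ((Finset.univ.val.map x).sort (· ≤ ·)).reverse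

/-- `x↑`: the values of `x` arranged in nondecreasing order. -/
def sortedAsc [Fintype α] (x : α → ℤ) : List ℤ :=
  (Finset.univ.val.map x).sort (· ≤ ·)

/-- `x ≤_dec y`: `x↓` is lexicographically less than or equal to `y↓`. -/
def DecLE [Fintype α] (x y : α → ℤ) : Prop :=
  sortedDesc x = sortedDesc y ∨ List.Lex (· < ·) (sortedDesc x) (sortedDesc y)

/-- `x ≤_inc y`: `x↑` is lexicographically less than or equal to `y↑`. -/
def IncLE [Fintype α] (x y : α → ℤ) : Prop :=
  sortedAsc x = sortedAsc y ∨ List.Lex (· < ·) (sortedAsc x) (sortedAsc y)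

/-- `m` is a decreasingly minimal element of `Bdot p`. -/
def DecMin [Fintype α] (p : Finset α → ℤ) (m : α → ℤ) : Prop :=
  m ∈ Bdot p ∧ ∀ y ∈ Bdot p, DecLE m y

section Aux
variable [Fintype α] [DecidableEq α]

lemma sortedDesc_coe (x : α → ℤ) : ((sortedDesc x : List ℤ) : Multiset ℤ) = Finset.univ.val.map x := by
  rw [sortedDesc, Multiset.coe_reverse, Multiset.sort_eq]

lemma sortedDesc_length (x : α → ℤ) : (sortedDesc x).length = Fintype.card α := by
  have := congrArg Multiset.card (sortedDesc_coe x)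
  simpa using this

lemma sortedDesc_sorted (x : α → ℤ) : (sortedDesc x).Pairwise (· ≥ ·) := by
  rw [sortedDesc, List.pairwise_reverse]
  have := Multiset.pairwise_sort (Finset.univ.val.map x) (· ≤ ·)
  exact this.imp (fun h => h)

end Aux

lemma mult_le_of_cons {a : ℤ} {t w : Multiset ℤ} (h : t ≤ a ::ₘ w) (ha : a ∉ t) : t ≤ w := by
  rw [Multiset.le_iff_count] at h ⊢
  intro b
  have := h b
  rcases eq_or_ne b a with rfl | hb
  · simp [Multiset.count_eq_zero_of_notMem ha]
  · simpa [Multiset.count_cons, hb] using this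

lemma sum_le_take_sorted : ∀ (l : List ℤ), l.Pairwise (· ≥ ·) → ∀ t : Multiset ℤ, t ≤ ↑l →
    t.sum ≤ ((l.take (Multiset.card t)).sum) := by
  intro l
  induction l with
  | nil =>
    intro _ t ht
    have : t = 0 := by simpa using Multiset.le_zero.1 (by simpa using ht)
    simp [this]
  | cons a l ih =>
    intro hl t ht
    have ha : ∀ b ∈ l, b ≤ a := fun b hb => List.rel_of_pairwise_cons hl hb
    by_cases hat : a ∈ t
    · obtain ⟨t', rfl⟩ := Multiset.exists_cons_of_mem hat
      have ht' : t' ≤ ↑l := by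
        have : a ::ₘ t' ≤ a ::ₘ (↑l : Multiset ℤ) := by simpa using ht
        exact (Multiset.cons_le_cons_iff a).1 this
      have := ih hl.of_cons t' ht'
      simp only [Multiset.card_cons, Multiset.sum_cons, List.take_succ_cons, List.sum_cons]
      linarith
    · have ht' : t ≤ ↑l := mult_le_of_cons (by simpa using ht) hat
      have h1 := ih hl.of_cons t ht'
      have hcard : Multiset.card t ≤ l.length := by
        simpa using Multiset.card_le_card ht'
      refine h1.trans ?_
      -- (l.take n).sum ≤ ((a :: l).take n).sum for n ≤ l.length
      rcases Nat.eq_zero_or_pos (Multiset.card t) with h0 | hpos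
      · simp [h0]
      · obtain ⟨n, hn'⟩ : ∃ n, Multiset.card t = n + 1 := ⟨Multiset.card t - 1, by omega⟩
        rw [hn'] at hcard ⊢
        simp only [List.take_succ_cons, List.sum_cons]
        rw [List.take_succ, List.sum_append]
        have hn : n < l.length := by omega
        rw [List.getElem?_eq_getElem hn]
        simp only [Option.toList_some, List.sum_cons, List.sum_nil, add_zero]
        have : l[n] ≤ a := ha _ (List.getElem_mem hn)
        linarith

lemma exists_pre_map {β : Type*} (f : β → ℤ) : ∀ (s : Multiset β) (t : Multiset ℤ), t ≤ s.map f → ∃ u, u ≤ s ∧ u.map f = t := by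
  intro s
  induction s using Multiset.induction with
  | empty =>
    intro t ht
    exact ⟨0, le_refl _, by simpa using (Multiset.le_zero.1 (by simpa using ht)).symm ▸ rfl⟩
  | cons a s ih =>
    intro t ht
    rw [Multiset.map_cons] at ht
    by_cases hat : f a ∈ t
    · obtain ⟨t', rfl⟩ := Multiset.exists_cons_of_mem hat
      have ht' : t' ≤ s.map f := (Multiset.cons_le_cons_iff (f a)).1 ht
      obtain ⟨u, hu, hu2⟩ := ih t' ht'
      exact ⟨a ::ₘ u, Multiset.cons_le_cons a hu, by simp [hu2]⟩
    · obtain ⟨u, hu, hu2⟩ := ih t (mult_le_of_cons ht hat)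
      exact ⟨u, hu.trans (Multiset.le_cons_self _ _), hu2⟩

section TopK
variable {α : Type*} [Fintype α] [DecidableEq α]

/-- Any `X.card`-element subset sum is at most the sum of the largest `X.card` values. -/
lemma sum_finset_le_take (y : α → ℤ) (X : Finset α) :
    ∑ s ∈ X, y s ≤ ((sortedDesc y).take X.card).sum := by
  have h1 : (X.val.map y) ≤ ((sortedDesc y : List ℤ) : Multiset ℤ) := by
    rw [sortedDesc_coe]
    exact Multiset.map_le_map (by simpa using X.subset_univ)
  have h2 := sum_le_take_sorted (sortedDesc y) (sortedDesc_sorted y) _ h1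
  rw [Finset.sum_eq_multiset_sum]
  simpa using h2

/-- The sum of the `k` largest values is attained by some `k`-element subset. -/
lemma exists_finset_take (y : α → ℤ) (k : ℕ) (hk : k ≤ Fintype.card α) :
    ∃ X : Finset α, X.card = k ∧ ∑ s ∈ X, y s = ((sortedDesc y).take k).sum := by
  have h1 : (((sortedDesc y).take k : List ℤ) : Multiset ℤ) ≤ Finset.univ.val.map y := by
    rw [← sortedDesc_coe]
    exact ((sortedDesc y).take_sublist k).subperm
  obtain ⟨u, hu, hu2⟩ := exists_pre_map y _ _ h1
  have hnd : u.Nodup := Multiset.nodup_of_le hu Finset.univ.nodup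
  refine ⟨⟨u, hnd⟩, ?_, ?_⟩
  · have := congrArg Multiset.card hu2
    simp only [Multiset.card_map, Multiset.coe_card, List.length_take, sortedDesc_length] at this
    simp only [Finset.card_mk]
    omega
  · rw [Finset.sum_eq_multiset_sum]
    show (u.map y).sum = _
    rw [hu2]
    exact congrArg _ rfl

end TopK

section Transfer
variable {α : Type*} [Fintype α] [DecidableEq α]

lemma sum_shift (y : α → ℤ) (s t : α) (X : Finset α) :
    ∑ u ∈ X, (y u + (if u = t then 1 else 0) - (if u = s then 1 else 0))
      = (∑ u ∈ X, y u) + (if t ∈ X then 1 else 0) - (if s ∈ X then 1 else 0) := by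
  rw [Finset.sum_sub_distrib, Finset.sum_add_distrib,
    Finset.sum_ite_eq' X t (fun _ => (1:ℤ)), Finset.sum_ite_eq' X s (fun _ => (1:ℤ))]

/-- Transferring one unit from a strictly larger coordinate to a smaller one does not
increase any top-k sum. -/
lemma take_sum_transfer (y : α → ℤ) (s t : α) (hst : s ≠ t) (hv : y t + 1 ≤ y s)
    (k : ℕ) (hk : k ≤ Fintype.card α) :
    ((sortedDesc (fun u => y u + (if u = t then 1 else 0) - (if u = s then 1 else 0))).take k).sum
      ≤ ((sortedDesc y).take k).sum := by
  set y' : α → ℤ := fun u => y u + (if u = t then 1 else 0) - (if u = s then 1 else 0) with hy'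
  obtain ⟨X, hXc, hXs⟩ := exists_finset_take y' k hk
  rw [← hXs]
  rw [show ∑ u ∈ X, y' u = (∑ u ∈ X, y u) + (if t ∈ X then 1 else 0) - (if s ∈ X then 1 else 0)
    from sum_shift y s t X]
  by_cases htX : t ∈ X
  · by_cases hsX : s ∈ X
    · simp only [htX, hsX, if_pos]
      have := sum_finset_le_take y X
      rw [hXc] at this
      linarith
    · -- replace t by s
      set X' := insert s (X.erase t) with hX'
      have hcard : X'.card = k := by
        rw [hX', Finset.card_insert_of_notMem (fun h => hsX (Finset.mem_of_mem_erase h)),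
          Finset.card_erase_of_mem htX, hXc]
        have : 1 ≤ k := hXc ▸ Finset.card_pos.2 ⟨t, htX⟩
        omega
      have hsum : ∑ u ∈ X', y u = y s + ((∑ u ∈ X, y u) - y t) := by
        rw [hX', Finset.sum_insert (fun h => hsX (Finset.mem_of_mem_erase h))]
        congr 1
        rw [← Finset.add_sum_erase X y htX]
        ring
      have := sum_finset_le_take y X'
      rw [hcard, hsum] at this
      simp only [htX, if_pos, hsX, if_neg, not_false_iff]
      linarith
  · have := sum_finset_le_take y X
    rw [hXc] at this
    by_cases hsX : s ∈ X <;> simp [htX, hsX] <;> linarith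

end Transfer

section Strict
variable {α : Type*} [Fintype α] [DecidableEq α]

/-- Transferring one unit across a gap of at least 2 strictly decreases some top-k sum. -/
lemma take_sum_transfer_strict (m : α → ℤ) (s t : α) (hst : s ≠ t) (hv : m t + 2 ≤ m s) :
    ∃ k, 1 ≤ k ∧ k ≤ Fintype.card α ∧
      ((sortedDesc (fun u => m u + (if u = t then 1 else 0) - (if u = s then 1 else 0))).take k).sum + 1
        ≤ ((sortedDesc m).take k).sum := by
  set m' : α → ℤ := fun u => m u + (if u = t then 1 else 0) - (if u = s then 1 else 0) with hm'
  set a := m s with ha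
  set T := Finset.univ.filter (fun u => a ≤ m u) with hT
  have hsT : s ∈ T := by simp [hT]; exact le_of_eq ha
  have htT : t ∉ T := by simp [hT]; omega
  set k := T.card with hk
  have hk1 : 1 ≤ k := Finset.card_pos.2 ⟨s, hsT⟩
  have hk2 : k ≤ Fintype.card α := Finset.card_le_univ T
  refine ⟨k, hk1, hk2, ?_⟩
  obtain ⟨X, hXc, hXs⟩ := exists_finset_take m' k hk2
  rw [← hXs]
  have hTtop : ∑ u ∈ T, m u ≤ ((sortedDesc m).take k).sum := by
    simpa [hk] using sum_finset_le_take m T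
  suffices h : (∑ u ∈ X, m' u) + 1 ≤ ∑ u ∈ T, m u by linarith
  rw [show ∑ u ∈ X, m' u = (∑ u ∈ X, m u) + (if t ∈ X then 1 else 0) - (if s ∈ X then 1 else 0)
    from sum_shift m s t X]
  have hsplitX : ∑ u ∈ X ∩ T, m u + ∑ u ∈ X \ T, m u = ∑ u ∈ X, m u :=
    Finset.sum_inter_add_sum_sdiff X T m
  have hsplitT : ∑ u ∈ T ∩ X, m u + ∑ u ∈ T \ X, m u = ∑ u ∈ T, m u :=
    Finset.sum_inter_add_sum_sdiff T X m
  rw [Finset.inter_comm] at hsplitX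
  set d := (X \ T).card with hd
  have hdT : (T \ X).card = d := by
    have h1 := Finset.card_sdiff_add_card_inter X T
    have h2 := Finset.card_sdiff_add_card_inter T X
    rw [Finset.inter_comm] at h2
    omega
  have hXTel : ∀ u ∈ X \ T, m u ≤ a - 1 := by
    intro u hu
    have := (Finset.mem_sdiff.1 hu).2
    simp [hT] at this
    omega
  have hlb : a * (d:ℤ) ≤ ∑ u ∈ T \ X, m u := by
    have := Finset.card_nsmul_le_sum (T \ X) m a (fun u hu => by
      have := (Finset.mem_sdiff.1 hu).1
      simp [hT] at this
      exact this)
    rw [hdT] at this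
    simpa [nsmul_eq_mul, mul_comm] using this
  have hub : ∑ u ∈ X \ T, m u ≤ (a - 1) * d - (if t ∈ X then 1 else 0) := by
    by_cases htX : t ∈ X
    · have htXT : t ∈ X \ T := Finset.mem_sdiff.2 ⟨htX, htT⟩
      rw [← Finset.add_sum_erase (X \ T) m htXT]
      have hcard : ((X \ T).erase t).card = d - 1 := by
        rw [Finset.card_erase_of_mem htXT]
      have hd1 : 1 ≤ d := Finset.card_pos.2 ⟨t, htXT⟩
      have := Finset.sum_le_card_nsmul ((X \ T).erase t) m (a - 1)
        (fun u hu => hXTel u (Finset.mem_of_mem_erase hu))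
      rw [hcard] at this
      simp only [nsmul_eq_mul] at this
      have hcast : ((d - 1 : ℕ) : ℤ) = (d : ℤ) - 1 := by omega
      rw [hcast] at this
      simp only [htX, if_pos]
      have : m t ≤ a - 2 := by omega
      nlinarith [this]
    · have := Finset.sum_le_card_nsmul (X \ T) m (a - 1) hXTel
      simp only [nsmul_eq_mul, htX, if_neg, not_false_iff] at this ⊢
      linarith [mul_comm ((a:ℤ) - 1) (d:ℤ), this]
  have hsXd : s ∉ X → 1 ≤ d := by
    intro hs
    have : s ∈ T \ X := Finset.mem_sdiff.2 ⟨hsT, hs⟩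
    have := Finset.card_pos.2 ⟨s, this⟩
    omega
  have hexp : (a - 1) * (d:ℤ) = a * d - d := by ring
  have hd0 : (0:ℤ) ≤ (d:ℤ) := Int.natCast_nonneg d
  by_cases htX : t ∈ X <;> by_cases hsX : s ∈ X <;>
      simp only [htX, hsX, if_pos, if_neg, not_false_iff] at hub ⊢
  · linarith
  · have hd1 : (1:ℤ) ≤ (d:ℤ) := by exact_mod_cast hsXd hsX
    linarith
  · linarith
  · have hd1 : (1:ℤ) ≤ (d:ℤ) := by exact_mod_cast hsXd hsX
    linarith
end Strict

lemma lex_exists_take : ∀ {l l' : List ℤ}, List.Lex (· < ·) l l' → l.length = l'.length →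
    ∃ j, j ≤ l'.length ∧ (l.take j).sum + 1 ≤ (l'.take j).sum := by
  intro l l' h
  induction h with
  | nil => intro h; simp at h
  | @rel a l b l' hab =>
    intro _
    exact ⟨1, by simp, by simp; omega⟩
  | @cons a l l' h ih =>
    intro hlen
    obtain ⟨j, hj, hs⟩ := ih (by simpa using hlen)
    refine ⟨j + 1, by simpa using hj, ?_⟩
    simp only [List.take_succ_cons, List.sum_cons]
    omega

section Exch
variable {α : Type*} [Fintype α] [DecidableEq α]

/-- The exchange lemma for `Bdot`. -/
lemma bdot_exchange (p : Finset α → ℤ) (hp : Supermodular p) (x z : α → ℤ)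
    (hx : x ∈ Bdot p) (hz : z ∈ Bdot p) (s : α) (hs : z s < x s) :
    ∃ t, t ≠ s ∧ x t < z t ∧
      (fun u => x u + (if u = t then 1 else 0) - (if u = s then 1 else 0)) ∈ Bdot p := by
  classical
  -- the family of x-tight sets containing s
  set F : Finset (Finset α) := Finset.univ.filter (fun X => s ∈ X ∧ ∑ u ∈ X, x u = p X) with hF
  have hunivF : Finset.univ ∈ F := by
    simp only [hF, Finset.mem_filter, Finset.mem_univ, true_and]
    exact hx.2

  have hFne : F.Nonempty := ⟨_, hunivF⟩
  -- tight sets are closed under intersection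
  have hclosed : ∀ X ∈ (F : Set (Finset α)), ∀ Y ∈ (F : Set (Finset α)), X ⊓ Y ∈ (F : Set (Finset α)) := by
    intro X hX Y hY
    simp only [Finset.coe_filter, Set.mem_setOf_eq, hF, Finset.mem_univ, true_and] at hX hY ⊢
    obtain ⟨hsX, hXt⟩ := hX
    obtain ⟨hsY, hYt⟩ := hY
    have h1 := hp X Y
    have h2 : ∑ u ∈ X ∪ Y, x u + ∑ u ∈ X ∩ Y, x u = ∑ u ∈ X, x u + ∑ u ∈ Y, x u :=
      Finset.sum_union_inter
    have h3 := hx.1 (X ∩ Y)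
    have h4 := hx.1 (X ∪ Y)
    refine ⟨Finset.mem_inter.2 ⟨hsX, hsY⟩, ?_⟩
    show ∑ u ∈ X ∩ Y, x u = p (X ∩ Y)
    omega
  set T : Finset α := F.inf' hFne id with hTdef
  have hTmem : T ∈ (F : Set (Finset α)) := Finset.inf'_mem _ hclosed F hFne id (fun i hi => hi)
  have hTmem' : s ∈ T ∧ ∑ u ∈ T, x u = p T := by
    simpa [hF] using hTmem
  have hTmin : ∀ X ∈ F, T ⊆ X := fun X hX => Finset.inf'_le id hX
  -- find t
  have hpz := hz.1 T
  rw [← hTmem'.2] at hpz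
  have hsum : ∑ u ∈ T.erase s, x u < ∑ u ∈ T.erase s, z u := by
    have hx2 := Finset.add_sum_erase T x hTmem'.1
    have hz2 := Finset.add_sum_erase T z hTmem'.1
    omega
  have hex : ∃ t ∈ T.erase s, x t < z t := by
    by_contra hcon
    push_neg at hcon
    exact absurd (Finset.sum_le_sum hcon) (not_le.2 hsum)
  obtain ⟨t, htmem, htlt⟩ := hex
  have hts : t ≠ s := Finset.ne_of_mem_erase htmem
  have htT : t ∈ T := Finset.mem_of_mem_erase htmem
  refine ⟨t, hts, htlt, ?_, ?_⟩
  · -- all lower bounds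
    intro X
    rw [show ∑ u ∈ X, (x u + (if u = t then 1 else 0) - (if u = s then 1 else 0))
        = (∑ u ∈ X, x u) + (if t ∈ X then 1 else 0) - (if s ∈ X then 1 else 0)
      from sum_shift x s t X]
    by_cases hsX : s ∈ X
    · by_cases htX : t ∈ X
      · simp only [hsX, htX, if_pos]
        have := hx.1 X
        omega
      · -- X is not tight
        have hXnt : ∑ u ∈ X, x u ≠ p X := by
          intro hcon
          have hXF : X ∈ F := by
            simp only [hF, Finset.mem_filter, Finset.mem_univ, true_and]
            exact ⟨hsX, hcon⟩
          exact htX (hTmin X hXF htT)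
        have := hx.1 X
        simp only [hsX, htX, if_pos, if_neg, not_false_iff]
        omega
    · have := hx.1 X
      by_cases htX : t ∈ X <;> simp only [hsX, htX, if_pos, if_neg, not_false_iff] <;> omega
  · rw [show ∑ u, (x u + (if u = t then 1 else 0) - (if u = s then 1 else 0))
        = (∑ u, x u) + (if t ∈ Finset.univ then 1 else 0) - (if s ∈ Finset.univ then 1 else 0)
      from sum_shift x s t Finset.univ]
    simp [hx.2]
end Exch

section Main
variable {α : Type*} [Fintype α] [DecidableEq α]

lemma decmin_local (p : Finset α → ℤ) (m : α → ℤ) (hm : DecMin p m)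
    (s t : α) (hst : s ≠ t)
    (hmem : (fun u => m u + (if u = t then 1 else 0) - (if u = s then 1 else 0)) ∈ Bdot p) :
    m s ≤ m t + 1 := by
  by_contra hcon
  push_neg at hcon
  have hdec := hm.2 _ hmem
  obtain ⟨k, _, hk2, hstrict⟩ := take_sum_transfer_strict m s t hst (by omega)
  rcases hdec with heq | hlex
  · rw [heq] at hstrict; omega
  · have hlen : (sortedDesc m).length =
        (sortedDesc (fun u => m u + (if u = t then 1 else 0) - (if u = s then 1 else 0))).length := by
      rw [sortedDesc_length, sortedDesc_length]
    obtain ⟨j, hj, hsum⟩ := lex_exists_take hlex hlen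
    rw [sortedDesc_length] at hj
    have := take_sum_transfer m s t hst (by omega) j hj
    omega

end Main

/-- Every dec-min element of `Ḃ(p)` minimizes the sum of the `k` largest components. -/
theorem stmt1 [Fintype α] [DecidableEq α] [Nonempty α]
    (p : Finset α → ℤ) (hp : Supermodular p) (h0 : p ∅ = 0)
    (hne : (Bdot p).Nonempty)
    (m : α → ℤ) (hm : DecMin p m)
    (k : ℕ) (hk1 : 1 ≤ k) (hk2 : k ≤ Fintype.card α)
    (y : α → ℤ) (hy : y ∈ Bdot p) :
    ((sortedDesc m).take k).sum ≤ ((sortedDesc y).take k).sum := by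
  have key : ∀ N : ℕ, ∀ y ∈ Bdot p, (∑ u, (m u - y u).natAbs) ≤ N →
      ((sortedDesc m).take k).sum ≤ ((sortedDesc y).take k).sum := by
    intro N
    induction N with
    | zero =>
      intro y hyB hPhi
      have hz : ∀ u ∈ Finset.univ, (m u - y u).natAbs = 0 :=
        Finset.sum_eq_zero_iff.1 (Nat.le_zero.1 hPhi)
      have hmy : m = y := funext fun u => by have := hz u (Finset.mem_univ u); omega
      rw [hmy]
    | succ N ih =>
      intro y hyB hPhi
      by_cases hcase : ∑ u, (m u - y u).natAbs ≤ N
      · exact ih y hyB hcase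
      have hyne : ∃ u, m u ≠ y u := by
        by_contra hcon
        push_neg at hcon
        have : ∑ u, (m u - y u).natAbs = 0 :=
          Finset.sum_eq_zero (fun u _ => by rw [hcon u]; simp)
        omega
      set P := Finset.univ.filter (fun u => m u < y u) with hP
      have hPne : P.Nonempty := by
        by_contra hcon
        rw [Finset.not_nonempty_iff_eq_empty] at hcon
        have hall : ∀ u, y u ≤ m u := by
          intro u
          by_contra h
          have hu : u ∈ P := by simp [hP]; omega
          rw [hcon] at hu
          exact absurd hu (Finset.notMem_empty u)
        obtain ⟨u0, hu0⟩ := hyne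
        have hlt : ∑ u, y u < ∑ u, m u :=
          Finset.sum_lt_sum (fun u _ => hall u)
            ⟨u0, Finset.mem_univ u0, by have := hall u0; omega⟩
        have h1 := hy.2  -- unused; sums
        have h2 := hyB.2
        have h3 := hm.1.2
        omega
      obtain ⟨s, hsP, hsmax⟩ := Finset.exists_max_image P y hPne
      have hsmy : m s < y s := by
        have := Finset.mem_filter.1 hsP
        simpa [hP] using this.2
      obtain ⟨t, hts, hty, hy'B⟩ := bdot_exchange p hp y m hyB hm.1 s hsmy
      set y' : α → ℤ := fun u => y u + (if u = t then 1 else 0) - (if u = s then 1 else 0)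
        with hy'def
      have hys : y t + 1 ≤ y s := by
        by_contra hcon2
        push_neg at hcon2
        obtain ⟨u, hut, huy, hm'B⟩ := bdot_exchange p hp m y hm.1 hyB t hty
        have hloc := decmin_local p m hm t u (Ne.symm hut) hm'B
        have huP : u ∈ P := by simp [hP]; omega
        have := hsmax u huP
        omega
      have hst : s ≠ t := Ne.symm hts
      have htrans := take_sum_transfer y s t hst hys k hk2
      have hy's : y' s = y s - 1 := by simp [hy'def, hst]
      have hy't : y' t = y t + 1 := by simp [hy'def, hts]
      have hy'o : ∀ u, u ≠ s → u ≠ t → y' u = y u := fun u h1 h2 => by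
        simp [hy'def, h1, h2]
      have hPhiLt : ∑ u, (m u - y' u).natAbs < ∑ u, (m u - y u).natAbs := by
        apply Finset.sum_lt_sum
        · intro u _
          by_cases hu1 : u = s
          · subst hu1; rw [hy's]; omega
          · by_cases hu2 : u = t
            · subst hu2; rw [hy't]; omega
            · rw [hy'o u hu1 hu2]
        · exact ⟨s, Finset.mem_univ s, by rw [hy's]; omega⟩
      exact (ih y' hy'B (by omega)).trans htrans
  exact key _ y hy le_rfl
end

section
/- Let p be an integer-valued supermodular set-function on the subsets of a nonempty finite set S with p(∅) = 0, and assume Ḃ(p) is nonempty. Let m be a β₁-covered element of Ḃ(p). Then m is pre-dec-min if and only if m(s) ≥ β₁ − 1 for every s ∈ S₁(m). -/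
open Finset

variable {α : Type*}

/-- `m` is `β`-covered: every component is at most `β`. -/
def IsCovered [Fintype α] (β : ℤ) (m : α → ℤ) : Prop := ∀ s : α, m s ≤ β

/-- `m` is a pre-dec-min element of `Ḃ(p)` (with respect to the bound `β`):
it is a `β`-covered element of `Ḃ(p)` with a minimum number of `β`-valued
components among all `β`-covered elements of `Ḃ(p)`. -/
def PreDecMin [Fintype α] [DecidableEq α] (p : Finset α → ℤ) (β : ℤ) (m : α → ℤ) : Prop :=
  m ∈ Bdot p ∧ IsCovered β m ∧
    ∀ m' ∈ Bdot p, IsCovered β m' →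
      (Finset.univ.filter (fun s => m s = β)).card ≤
        (Finset.univ.filter (fun s => m' s = β)).card

/-- `S₁(m)`: the intersection of all `m`-tight sets containing every `β`-valued element. -/
def S1m [Fintype α] (p : Finset α → ℤ) (β : ℤ) (m : α → ℤ) : Set α :=
  {s | ∀ X : Finset α, (∑ v ∈ X, m v = p X) → (∀ t : α, m t = β → t ∈ X) → s ∈ X}

private lemma tight_inter_union [Fintype α] [DecidableEq α]
    (p : Finset α → ℤ) (hp : Supermodular p) (m : α → ℤ)
    (hm : ∀ X : Finset α, p X ≤ ∑ v ∈ X, m v) {X Y : Finset α}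
    (hX : ∑ v ∈ X, m v = p X) (hY : ∑ v ∈ Y, m v = p Y) :
    (∑ v ∈ X ∩ Y, m v = p (X ∩ Y)) ∧ (∑ v ∈ X ∪ Y, m v = p (X ∪ Y)) := by
  have h1 := hm (X ∩ Y)
  have h2 := hm (X ∪ Y)
  have h3 := hp X Y
  have h4 : (∑ v ∈ X ∪ Y, m v) + ∑ v ∈ X ∩ Y, m v = (∑ v ∈ X, m v) + ∑ v ∈ Y, m v :=
    Finset.sum_union_inter
  constructor <;> linarith

/-- A `β₁`-covered element `m` of `Ḃ(p)` is pre-dec-min iff `m(s) ≥ β₁ − 1`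
for every `s ∈ S₁(m)`. -/
theorem stmt3 [Fintype α] [DecidableEq α] [Nonempty α]
    (p : Finset α → ℤ) (hp : Supermodular p) (h0 : p ∅ = 0)
    (hne : (Bdot p).Nonempty) (β₁ : ℤ)
    (hβ : IsLeast {b : ℤ | ∃ m ∈ Bdot p, ∀ s : α, m s ≤ b} β₁)
    (m : α → ℤ) (hm : m ∈ Bdot p) (hcov : IsCovered β₁ m) :
    PreDecMin p β₁ m ↔ ∀ s ∈ S1m p β₁ m, β₁ - 1 ≤ m s := by
  classical
  obtain ⟨hm1, hm2⟩ := hm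
  constructor
  · -- pre-dec-min → lower bound on S₁(m)
    intro hpre s hs
    by_contra hlt
    push_neg at hlt
    have hs2 : m s ≤ β₁ - 2 := by omega
    -- find t with m t = β₁ such that every tight set containing t contains s
    have key : ∃ t : α, m t = β₁ ∧
        ∀ X : Finset α, (∑ v ∈ X, m v = p X) → t ∈ X → s ∈ X := by
      by_contra hno
      push_neg at hno
      -- for each β₁-valued t, there is a tight set containing t but not s;
      -- the union over all such (plus ∅) is tight, contains all β₁-elements, misses s
      have grow : ∀ G : Finset α,
          (∀ t ∈ G, ∃ X : Finset α, (∑ v ∈ X, m v = p X) ∧ t ∈ X ∧ s ∉ X) →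
          ∃ U : Finset α, (∑ v ∈ U, m v = p U) ∧ (∀ t ∈ G, t ∈ U) ∧ s ∉ U := by
        intro G
        induction G using Finset.induction_on with
        | empty =>
            intro _
            exact ⟨∅, by simp [h0], by simp, by simp⟩
        | insert _ _ hnotin ih =>
            rename_i a G
            intro hG
            obtain ⟨U, hU1, hU2, hU3⟩ := ih (fun t ht => hG t (Finset.mem_insert_of_mem ht))
            obtain ⟨X, hX1, hX2, hX3⟩ := hG a (Finset.mem_insert_self a G)
            refine ⟨X ∪ U, (tight_inter_union p hp m hm1 hX1 hU1).2, ?_, ?_⟩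
            · intro t ht
              rcases Finset.mem_insert.1 ht with h | h
              · exact Finset.mem_union_left _ (h ▸ hX2)
              · exact Finset.mem_union_right _ (hU2 t h)
            · simp [Finset.mem_union, hX3, hU3]
      obtain ⟨U, hU1, hU2, hU3⟩ := grow (Finset.univ.filter (fun t => m t = β₁))
        (fun t ht => by
          have := (Finset.mem_filter.1 ht).2
          obtain ⟨X, hX⟩ := hno t this
          exact ⟨X, hX.1, hX.2.1, hX.2.2⟩)
      exact hU3 (hs U hU1 (fun t ht => hU2 t (Finset.mem_filter.2 ⟨Finset.mem_univ t, ht⟩)))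
    obtain ⟨t, htβ, ht⟩ := key
    have hts : s ≠ t := fun h => by rw [h, htβ] at hs2; omega
    -- the exchanged vector
    set m' : α → ℤ := fun v => m v + ((if v = s then 1 else 0) + (if v = t then -1 else 0))
      with hm'def
    have hsum : ∀ X : Finset α, ∑ v ∈ X, m' v =
        (∑ v ∈ X, m v) + ((if s ∈ X then 1 else 0) + (if t ∈ X then (-1 : ℤ) else 0)) := by
      intro X
      rw [hm'def]
      rw [Finset.sum_add_distrib, Finset.sum_add_distrib,
        Finset.sum_ite_eq' X s (fun _ => (1 : ℤ)), Finset.sum_ite_eq' X t (fun _ => (-1 : ℤ))]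
    have hmem' : m' ∈ Bdot p := by
      constructor
      · intro X
        rw [hsum X]
        by_cases h1 : t ∈ X
        · by_cases h2 : s ∈ X
          · simp only [h1, h2, if_pos]
            have := hm1 X
            omega
          · have hnt : ∑ v ∈ X, m v ≠ p X := fun htight => h2 (ht X htight h1)
            have hlt2 : p X < ∑ v ∈ X, m v := lt_of_le_of_ne (hm1 X) (Ne.symm hnt)
            rw [if_neg h2, if_pos h1]
            omega
        · have hle := hm1 X
          rw [if_neg h1]
          split <;> omega
      · rw [hsum Finset.univ]
        simp [hm2]
    have hcov' : IsCovered β₁ m' := by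
      intro v
      rw [hm'def]
      simp only
      by_cases h1 : v = s
      · rw [if_pos h1, if_neg (h1 ▸ hts), h1]; omega
      · rw [if_neg h1]
        have := hcov v
        split <;> omega
    have hfilter : Finset.univ.filter (fun v => m' v = β₁) =
        (Finset.univ.filter (fun v => m v = β₁)).erase t := by
      ext v
      simp only [Finset.mem_filter, Finset.mem_erase, Finset.mem_univ, true_and]
      rw [hm'def]
      simp only
      by_cases h1 : v = t
      · subst h1
        rw [if_neg (Ne.symm hts), if_pos rfl]
        constructor
        · intro h; omega
        · intro h; exact absurd rfl h.1
      · rw [if_neg h1]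
        by_cases h2 : v = s
        · subst h2
          rw [if_pos rfl]
          constructor
          · intro h; omega
          · intro h; omega
        · rw [if_neg h2]
          constructor
          · intro h; exact ⟨h1, by omega⟩
          · intro h; omega
    have hcard := hpre.2.2 m' hmem' hcov'
    rw [hfilter] at hcard
    have htmem : t ∈ Finset.univ.filter (fun v => m v = β₁) :=
      Finset.mem_filter.2 ⟨Finset.mem_univ t, htβ⟩
    rw [Finset.card_erase_of_mem htmem] at hcard
    have hpos : 0 < (Finset.univ.filter (fun v => m v = β₁)).card :=
      Finset.card_pos.2 ⟨t, htmem⟩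
    omega
  · -- lower bound on S₁(m) → pre-dec-min
    intro hmin
    refine ⟨⟨hm1, hm2⟩, hcov, ?_⟩
    intro m' hm' hcov'
    -- construct the minimal tight set containing all β₁-valued elements
    have grow : ∀ G : Finset (Finset α),
        (∀ X ∈ G, (∑ v ∈ X, m v = p X) ∧ (∀ t : α, m t = β₁ → t ∈ X)) →
        ∃ I : Finset α, (∑ v ∈ I, m v = p I) ∧ (∀ t : α, m t = β₁ → t ∈ I) ∧
          ∀ X ∈ G, I ⊆ X := by
      intro G
      induction G using Finset.induction_on with
      | empty =>
          intro _
          exact ⟨Finset.univ, hm2, fun t _ => Finset.mem_univ t, by simp⟩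
      | insert _ _ hnotin ih =>
          rename_i X G
          intro hG
          obtain ⟨I, hI1, hI2, hI3⟩ := ih (fun Y hY => hG Y (Finset.mem_insert_of_mem hY))
          obtain ⟨hX1, hX2⟩ := hG X (Finset.mem_insert_self X G)
          refine ⟨X ∩ I, (tight_inter_union p hp m hm1 hX1 hI1).1, ?_, ?_⟩
          · intro t ht
            exact Finset.mem_inter.2 ⟨hX2 t ht, hI2 t ht⟩
          · intro Y hY
            rcases Finset.mem_insert.1 hY with h | h
            · exact h ▸ Finset.inter_subset_left
            · exact Finset.Subset.trans Finset.inter_subset_right (hI3 Y h)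
    obtain ⟨I, hI1, hI2, hI3⟩ := grow
      (Finset.univ.filter (fun X => (∑ v ∈ X, m v = p X) ∧ ∀ t : α, m t = β₁ → t ∈ X))
      (fun X hX => (Finset.mem_filter.1 hX).2)
    -- every element of I is in S₁(m)
    have hIS1 : ∀ v ∈ I, v ∈ S1m p β₁ m := by
      intro v hv X hX1 hX2
      exact hI3 X (Finset.mem_filter.2 ⟨Finset.mem_univ X, hX1, hX2⟩) hv
    have hge : ∀ v ∈ I, β₁ - 1 ≤ m v := fun v hv => hmin v (hIS1 v hv)
    -- counting
    have e1 : ∑ v ∈ I, m v = ∑ v ∈ I, ((β₁ - 1) + if m v = β₁ then 1 else 0) := by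
      refine Finset.sum_congr rfl (fun v hv => ?_)
      have h1 := hcov v
      have h2 := hge v hv
      split <;> omega
    have e2 : ∑ v ∈ I, m' v ≤ ∑ v ∈ I, ((β₁ - 1) + if m' v = β₁ then 1 else 0) := by
      refine Finset.sum_le_sum (fun v _ => ?_)
      have h1 := hcov' v
      split <;> omega
    have e3 : p I ≤ ∑ v ∈ I, m' v := hm'.1 I
    have e4 : ∑ v ∈ I, ((β₁ - 1) + if m v = β₁ then 1 else 0) =
        (β₁ - 1) * I.card + (I.filter (fun v => m v = β₁)).card := by
      rw [Finset.sum_add_distrib, Finset.sum_const, Finset.sum_boole, nsmul_eq_mul, mul_comm]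
    have e5 : ∑ v ∈ I, ((β₁ - 1) + if m' v = β₁ then 1 else 0) =
        (β₁ - 1) * I.card + (I.filter (fun v => m' v = β₁)).card := by
      rw [Finset.sum_add_distrib, Finset.sum_const, Finset.sum_boole, nsmul_eq_mul, mul_comm]
    have e6 : I.filter (fun v => m v = β₁) = Finset.univ.filter (fun v => m v = β₁) := by
      ext v
      simp only [Finset.mem_filter, Finset.mem_univ, true_and]
      exact ⟨fun h => h.2, fun h => ⟨hI2 v h, h⟩⟩
    have e7 : (I.filter (fun v => m' v = β₁)).card ≤
        (Finset.univ.filter (fun v => m' v = β₁)).card :=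
      Finset.card_le_card (Finset.filter_subset_filter _ (Finset.subset_univ I))
    have key : ((Finset.univ.filter (fun v => m v = β₁)).card : ℤ) ≤
        ((Finset.univ.filter (fun v => m' v = β₁)).card : ℤ) := by
      rw [← e6]
      have : ((I.filter (fun v => m' v = β₁)).card : ℤ) ≤
          ((Finset.univ.filter (fun v => m' v = β₁)).card : ℤ) := by exact_mod_cast e7
      linarith [e1 ▸ hI1, e3, e2, e4, e5]
    exact_mod_cast key
end
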